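/- Let f(U) = (1/2)‖UUᵀ - M*‖_F² with M* = V*V*ᵀ of rank r and X* = {V*R : R orthogonal}. For any U with dist_F(U, X*) ≤ (1/3)(σ_r*)^{1/2}, writing Δ = U - P_{X*}(U), one has ⟨∇f(U), Δ⟩ ≥ (2/3)σ_r*·‖Δ‖_F², where σ_r* = σ_r(M*). -/

import Mathlib

open Matrix

/-- The Frobenius norm of a real matrix. -/
noncomputable def frob {m n : ℕ} (A : Matrix (Fin m) (Fin n) ℝ) : ℝ :=
  Real.sqrt (∑ i, ∑ j, (A i j) ^ 2)

/-- The trace inner product `⟨A, B⟩ = tr(AᵀB)`. -/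
def mip {m n : ℕ} (A B : Matrix (Fin m) (Fin n) ℝ) : ℝ :=
  (Aᵀ * B).trace

/-- The gradient of `f(U) = (1/2)‖UUᵀ - M‖_F²`. -/
noncomputable def gradf {d r : ℕ} (M : Matrix (Fin d) (Fin d) ℝ)
    (U : Matrix (Fin d) (Fin r) ℝ) : Matrix (Fin d) (Fin r) ℝ :=
  (2 : ℝ) • ((U * Uᵀ - M) * U)

namespace MFaux
variable {m n r : ℕ}

lemma frob_nonneg (A : Matrix (Fin m) (Fin n) ℝ) : 0 ≤ frob A := Real.sqrt_nonneg _

lemma frob_sq (A : Matrix (Fin m) (Fin n) ℝ) : frob A ^ 2 = ∑ i, ∑ j, A i j ^ 2 :=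
  Real.sq_sqrt (by positivity)

lemma trace_transpose_mul (A : Matrix (Fin m) (Fin n) ℝ) :
    (Aᵀ * A).trace = ∑ i, ∑ j, A i j ^ 2 := by
  simp only [Matrix.trace, Matrix.diag, Matrix.mul_apply, Matrix.transpose_apply, sq]
  exact Finset.sum_comm

lemma frob_sq_eq (A : Matrix (Fin m) (Fin n) ℝ) : (Aᵀ * A).trace = frob A ^ 2 := by
  rw [frob_sq, trace_transpose_mul]

lemma dot_cs (v w : Fin m → ℝ) :
    -(Real.sqrt (v ⬝ᵥ v) * Real.sqrt (w ⬝ᵥ w)) ≤ v ⬝ᵥ w := by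
  have h := Finset.sum_mul_sq_le_sq_mul_sq Finset.univ v w
  have h1 : (v ⬝ᵥ w)^2 ≤ (v ⬝ᵥ v) * (w ⬝ᵥ w) := by
    simpa [dotProduct, sq] using h
  have h2 : |v ⬝ᵥ w| ≤ Real.sqrt ((v ⬝ᵥ v) * (w ⬝ᵥ w)) := by
    rw [← Real.sqrt_sq_eq_abs]
    exact Real.sqrt_le_sqrt h1
  have hv : 0 ≤ v ⬝ᵥ v := Finset.sum_nonneg fun i _ => mul_self_nonneg _
  rw [Real.sqrt_mul hv] at h2
  have := neg_abs_le (v ⬝ᵥ w)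
  linarith

lemma mulVec_sq_le (A : Matrix (Fin m) (Fin n) ℝ) (x : Fin n → ℝ) :
    (A *ᵥ x) ⬝ᵥ (A *ᵥ x) ≤ frob A ^ 2 * (x ⬝ᵥ x) := by
  rw [frob_sq]
  simp only [dotProduct, mulVec, dotProduct]
  rw [Finset.sum_mul]
  apply Finset.sum_le_sum
  intro i _
  have := Finset.sum_mul_sq_le_sq_mul_sq Finset.univ (fun j => A i j) x
  calc (∑ j, A i j * x j) * (∑ j, A i j * x j) = (∑ j, A i j * x j)^2 := (sq _).symm
    _ ≤ (∑ j, A i j ^2) * ∑ j, x j ^2 := this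
    _ = (∑ j, A i j ^2) * ∑ j, x j * x j := by simp [sq]

lemma dot_mulVec_self (M : Matrix (Fin m) (Fin n) ℝ) (z : Fin n → ℝ) :
    (M *ᵥ z) ⬝ᵥ (M *ᵥ z) = z ⬝ᵥ ((Mᵀ * M) *ᵥ z) := by
  symm
  rw [← mulVec_mulVec, dotProduct_mulVec, vecMul_transpose]

lemma rayleigh (A : Matrix (Fin r) (Fin r) ℝ) (hA : A.IsHermitian) [Nonempty (Fin r)]
    (x : Fin r → ℝ) :
    (⨅ i, hA.eigenvalues i) * (x ⬝ᵥ x) ≤ x ⬝ᵥ (A *ᵥ x) := by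
  set V : Matrix (Fin r) (Fin r) ℝ := (IsHermitian.eigenvectorUnitary hA : Matrix (Fin r) (Fin r) ℝ) with hV
  have hVV : V * star V = 1 := (Matrix.mem_unitaryGroup_iff).mp (IsHermitian.eigenvectorUnitary hA).2
  have hsV : star V = Vᵀ := by
    simp [Matrix.star_eq_conjTranspose, Matrix.conjTranspose_eq_transpose_of_trivial]
  set y : Fin r → ℝ := Vᵀ *ᵥ x with hy
  have hyy : y ⬝ᵥ y = x ⬝ᵥ x := by
    rw [hy, dotProduct_mulVec, vecMul_transpose, mulVec_mulVec, ← hsV, hVV, one_mulVec]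
  have hAx : x ⬝ᵥ (A *ᵥ x) = ∑ i, hA.eigenvalues i * (y i)^2 := by
    conv_lhs => rw [hA.spectral_theorem, Unitary.conjStarAlgAut_apply]
    rw [hsV, ← Matrix.mulVec_mulVec, ← Matrix.mulVec_mulVec, dotProduct_mulVec,
      ← hV, ← Matrix.mulVec_transpose]
    simp only [← hy, dotProduct, mulVec_diagonal, Function.comp_apply, RCLike.ofReal_real_eq_id,
      id_eq]
    exact Finset.sum_congr rfl fun i _ => by ring
  rw [hAx, ← hyy]
  have hle : ∀ i : Fin r, (⨅ j, hA.eigenvalues j) ≤ hA.eigenvalues i := fun i =>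
    ciInf_le (Finite.bddBelow_range _) i
  calc (⨅ j, hA.eigenvalues j) * (y ⬝ᵥ y) = ∑ i, (⨅ j, hA.eigenvalues j) * (y i)^2 := by
        simp only [dotProduct, Finset.mul_sum, sq]
    _ ≤ ∑ i, hA.eigenvalues i * (y i)^2 :=
        Finset.sum_le_sum fun i _ => mul_le_mul_of_nonneg_right (hle i) (sq_nonneg _)

lemma trace_psd_nonneg (A : Matrix (Fin r) (Fin r) ℝ) (hA : A.PosSemidef) : 0 ≤ A.trace := by
  rw [Matrix.trace]
  apply Finset.sum_nonneg
  intro i _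
  have := hA.dotProduct_mulVec_nonneg (Pi.single i 1)
  simpa [Matrix.mulVec_single, dotProduct, Pi.single_apply] using this

lemma trace_mul_psd_nonneg (A B : Matrix (Fin r) (Fin r) ℝ) (hA : A.PosSemidef)
    (hB : B.PosSemidef) : 0 ≤ (A * B).trace := by
  obtain ⟨C, hC⟩ : ∃ C : Matrix (Fin r) (Fin r) ℝ, A = Cᴴ * C := by
    open scoped MatrixOrder in
    obtain ⟨X, hX, -, hXX⟩ := CFC.exists_sqrt_of_isSelfAdjoint_of_quasispectrumRestricts
      hA.isHermitian (QuasispectrumRestricts.nnreal_of_nonneg hA.nonneg)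
    exact ⟨X, by rw [← hXX]; exact congrArg (· * X) hX.star_eq.symm⟩
  rw [hC, ← Matrix.trace_mul_cycle]
  exact trace_psd_nonneg _ (hB.mul_mul_conjTranspose_same C)

lemma trace_mul_stdBasis (S : Matrix (Fin r) (Fin r) ℝ) (a b : Fin r) :
    (S * single a b (1:ℝ)).trace = S b a := by
  rw [Matrix.trace]
  rw [show ∑ k, (S * single a b (1:ℝ)).diag k
      = ∑ k, if k = b then S k a else 0 from Finset.sum_congr rfl fun k _ => by
    by_cases h : k = b
    · subst h; simp [Matrix.diag]
    · simp [Matrix.diag, h, mul_single_apply_of_ne]]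
  simp

noncomputable section

def giv (i j : Fin r) (c s : ℝ) : Matrix (Fin r) (Fin r) ℝ :=
  1 + (c - 1) • (single i i 1 + single j j 1)
    + s • (single j i 1 - single i j 1)

lemma transpose_std (a : Fin m) (b : Fin n) (c : ℝ) :
    (single a b c)ᵀ = single b a c := by
  ext x y
  simp only [Matrix.transpose_apply, Matrix.single, Matrix.of_apply]
  by_cases h1 : a = y <;> by_cases h2 : b = x <;> simp [h1, h2]

lemma giv_transpose (i j : Fin r) (c s : ℝ) : (giv i j c s)ᵀ = giv i j c (-s) := by
  simp [giv, Matrix.transpose_add, Matrix.transpose_smul, Matrix.transpose_sub,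
    transpose_std, neg_smul, smul_sub]
  abel

lemma giv_mul_giv (i j : Fin r) (hij : i ≠ j) (c s s' : ℝ) :
    giv i j c s * giv i j c s' = 1 + ((c-1)*(c-1) + 2*(c-1) - s*s') •
      (single i i 1 + single j j 1)
      + ((s + s') + ((c-1)*s' + s*(c-1))) • (single j i 1 - single i j 1) := by
  set P : Matrix (Fin r) (Fin r) ℝ := single i i 1 + single j j 1 with hP
  set K : Matrix (Fin r) (Fin r) ℝ := single j i 1 - single i j 1 with hK
  have hPP : P * P = P := by
    simp [hP, add_mul, mul_add, single_mul_single_same, single_mul_single_of_ne, hij,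
      Ne.symm hij]
  have hPK : P * K = K := by
    simp [hP, hK, add_mul, mul_add, mul_sub, single_mul_single_same, single_mul_single_of_ne,
      hij, Ne.symm hij]
    try abel
  have hKP : K * P = K := by
    simp [hP, hK, add_mul, mul_add, sub_mul, single_mul_single_same, single_mul_single_of_ne,
      hij, Ne.symm hij]
    try abel
  have hKK : K * K = -P := by
    simp [hP, hK, sub_mul, mul_sub, single_mul_single_same, single_mul_single_of_ne,
      hij, Ne.symm hij]
    abel
  simp only [giv, ← hP, ← hK, add_mul, mul_add, one_mul, mul_one, smul_mul_assoc,
    mul_smul_comm, hPP, hPK, hKP, hKK, smul_smul, smul_neg]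
  module

lemma giv_orth (i j : Fin r) (hij : i ≠ j) (c s : ℝ) (h : c^2 + s^2 = 1) :
    giv i j c s * (giv i j c s)ᵀ = 1 ∧ (giv i j c s)ᵀ * giv i j c s = 1 := by
  rw [giv_transpose]
  constructor
  · rw [giv_mul_giv i j hij]
    have h1 : (c-1)*(c-1) + 2*(c-1) - s*(-s) = 0 := by nlinarith
    have h2 : (s + -s) + ((c-1)*(-s) + s*(c-1)) = 0 := by ring
    rw [h1, h2]
    simp
  · rw [giv_mul_giv i j hij]
    have h1 : (c-1)*(c-1) + 2*(c-1) - (-s)*s = 0 := by nlinarith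
    have h2 : ((-s) + s) + ((c-1)*s + (-s)*(c-1)) = 0 := by ring
    rw [h1, h2]
    simp

lemma symm_of_trace_le (S : Matrix (Fin r) (Fin r) ℝ)
    (h : ∀ Q : Matrix (Fin r) (Fin r) ℝ, Q * Qᵀ = 1 → Qᵀ * Q = 1 → (S * Q).trace ≤ S.trace) :
    Sᵀ = S := by
  ext i j
  simp only [Matrix.transpose_apply]
  rcases eq_or_ne i j with rfl | hij
  · rfl
  set a := S j j + S i i with ha
  set t := S j i - S i j with ht
  have key : t = 0 := by
    have h2 : (0:ℝ) ≤ a^2 + t^2 := by positivity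
    set hs := Real.sqrt (a^2 + t^2) with hhs
    have hs0 : 0 ≤ hs := Real.sqrt_nonneg _
    have hsq : hs^2 = a^2 + t^2 := Real.sq_sqrt h2
    rcases eq_or_lt_of_le hs0 with heq | hpos
    · have : a^2 + t^2 = 0 := by rw [← hsq, ← heq]; ring
      nlinarith [sq_nonneg a, sq_nonneg t]
    · set c := a / hs with hc
      set s := t / hs with hsdef
      have hcs : c^2 + s^2 = 1 := by
        rw [hc, hsdef, div_pow, div_pow, ← add_div, ← hsq]
        exact div_self (by positivity)
      obtain ⟨hQ1, hQ2⟩ := giv_orth j i hij.symm c s hcs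
      have htr := h _ hQ1 hQ2
      have hexp : (S * giv j i c s).trace = S.trace + (c-1)*a + s*t := by
        rw [giv, mul_add, mul_add, mul_one, Matrix.mul_smul, Matrix.mul_smul,
          mul_add, mul_sub, Matrix.trace_add, Matrix.trace_add, Matrix.trace_smul,
          Matrix.trace_smul, Matrix.trace_add, Matrix.trace_sub,
          trace_mul_stdBasis, trace_mul_stdBasis, trace_mul_stdBasis, trace_mul_stdBasis]
        simp only [smul_eq_mul, ← ha, ← ht]
      rw [hexp] at htr
      have hle : (c-1)*a + s*t ≤ 0 := by linarith
      have h4 : ((c-1)*a + s*t) * hs ≤ 0 := mul_nonpos_of_nonpos_of_nonneg hle hs0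
      have h45 : a^2 + t^2 - a*hs ≤ 0 := by
        have h5 : ((c-1)*a + s*t) * hs = a^2 + t^2 - a*hs := by
          rw [hc, hsdef]; field_simp; ring
        linarith [h5 ▸ h4]
      have hsa : hs ≤ a := by nlinarith [hsq, h45, hpos]
      have ht2 : t^2 ≤ 0 := by
        nlinarith [hsq, h45, mul_le_mul_of_nonneg_left hsa (le_trans hs0 hsa)]
      nlinarith [sq_nonneg t]
  linarith [key]

end
end MFaux

set_option maxHeartbeats 2000000 in
open MFaux in
/-- For `f(U) = (1/2)‖UUᵀ - M*‖_F²` with `M* = V*V*ᵀ` of rank `r`: for any `U`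
within Frobenius distance `(1/3)(σ_r*)^{1/2}` of `X* = {V*R : R orthogonal}`,
writing `Δ = U - P_{X*}(U)`, one has `⟨∇f(U), Δ⟩ ≥ (2/3)σ_r*·‖Δ‖_F²`. -/
theorem matrix_factorization_local_regularity_lower {d r : ℕ} (hr : 0 < r)
    (Vs : Matrix (Fin d) (Fin r) ℝ) (hrank : Vs.rank = r)
    (σr : ℝ)
    (hherm : (Vsᵀ * Vs).IsHermitian)
    (hσr : σr = haveI : Nonempty (Fin r) := Fin.pos_iff_nonempty.mp hr
      ⨅ i, hherm.eigenvalues i)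
    (U Us : Matrix (Fin d) (Fin r) ℝ)
    (hUs : ∃ R : Matrix (Fin r) (Fin r) ℝ,
      R * Rᵀ = 1 ∧ Rᵀ * R = 1 ∧ Us = Vs * R)
    (hproj : ∀ R : Matrix (Fin r) (Fin r) ℝ, R * Rᵀ = 1 → Rᵀ * R = 1 →
      frob (U - Us) ≤ frob (U - Vs * R))
    (hclose : frob (U - Us) ≤ 1 / 3 * Real.sqrt σr) :
    2 / 3 * σr * frob (U - Us) ^ 2 ≤ mip (gradf (Vs * Vsᵀ) U) (U - Us) := by
  haveI : Nonempty (Fin r) := Fin.pos_iff_nonempty.mp hr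
  obtain ⟨R0, hR01, hR02, hUsdef⟩ := hUs
  set Δ : Matrix (Fin d) (Fin r) ℝ := U - Us with hΔ
  set S : Matrix (Fin r) (Fin r) ℝ := Uᵀ * Us with hSdef
  -- σr is nonnegative
  have hpsdVV : (Vsᵀ * Vs).PosSemidef := by
    have := Matrix.posSemidef_conjTranspose_mul_self Vs
    simpa [Matrix.conjTranspose_eq_transpose_of_trivial] using this
  have hσnn : 0 ≤ σr := by
    rw [hσr]
    exact le_ciInf fun i => hpsdVV.eigenvalues_nonneg i
  -- Step 1: trace comparison from the projection property
  have htr_le : ∀ R : Matrix (Fin r) (Fin r) ℝ, R * Rᵀ = 1 → Rᵀ * R = 1 →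
      ((Vs * R)ᵀ * U).trace ≤ (Usᵀ * U).trace := by
    intro R hR1 hR2
    have h1 := hproj R hR1 hR2
    have h2 : frob (U - Us) ^ 2 ≤ frob (U - Vs * R) ^ 2 :=
      pow_le_pow_left₀ (frob_nonneg _) h1 2
    have hexpand : ∀ B : Matrix (Fin d) (Fin r) ℝ,
        frob (U - B) ^ 2 = (Uᵀ * U).trace - 2 * (Bᵀ * U).trace + (Bᵀ * B).trace := by
      intro B
      rw [← frob_sq_eq]
      have hBU : (Uᵀ * B).trace = (Bᵀ * U).trace := by
        rw [← Matrix.trace_transpose (Uᵀ * B), Matrix.transpose_mul, Matrix.transpose_transpose]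
      rw [Matrix.transpose_sub, Matrix.sub_mul, Matrix.mul_sub, Matrix.mul_sub,
        Matrix.trace_sub, Matrix.trace_sub, Matrix.trace_sub, hBU]
      ring
    have horthB : ∀ R' : Matrix (Fin r) (Fin r) ℝ, R' * R'ᵀ = 1 →
        ((Vs * R')ᵀ * (Vs * R')).trace = (Vsᵀ * Vs).trace := by
      intro R' hR'
      have : (Vs * R')ᵀ * (Vs * R') = R'ᵀ * ((Vsᵀ * Vs) * R') := by
        rw [Matrix.transpose_mul]; simp only [Matrix.mul_assoc]
      rw [this, Matrix.trace_mul_comm, Matrix.mul_assoc, Matrix.mul_assoc, hR', Matrix.mul_one]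
    rw [hexpand, hexpand, hUsdef, horthB R0 hR01, horthB R hR1, ← hUsdef] at h2
    linarith
  -- Step 2: S is symmetric
  have hS : Sᵀ = S := by
    apply symm_of_trace_le
    intro Q hQ1 hQ2
    have horth1 : (R0 * Q) * (R0 * Q)ᵀ = 1 := by
      rw [Matrix.transpose_mul, Matrix.mul_assoc, ← Matrix.mul_assoc Q, hQ1, Matrix.one_mul, hR01]
    have horth2 : (R0 * Q)ᵀ * (R0 * Q) = 1 := by
      rw [Matrix.transpose_mul, Matrix.mul_assoc, ← Matrix.mul_assoc R0ᵀ, hR02, Matrix.one_mul, hQ2]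
    have h1 := htr_le (R0 * Q) horth1 horth2
    have hSQ : S * Q = Uᵀ * (Vs * (R0 * Q)) := by
      rw [hSdef, hUsdef]; simp only [Matrix.mul_assoc]
    have htrSQ : (S * Q).trace = ((Vs * (R0 * Q))ᵀ * U).trace := by
      rw [hSQ, ← Matrix.trace_transpose (Uᵀ * (Vs * (R0 * Q))), Matrix.transpose_mul,
        Matrix.transpose_transpose]
    have htrS : S.trace = (Usᵀ * U).trace := by
      rw [hSdef, ← Matrix.trace_transpose (Uᵀ * Us), Matrix.transpose_mul,
        Matrix.transpose_transpose]
    rw [htrSQ, htrS]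
    exact h1
  -- Step 3: quadratic form lower bound for S
  have hS_lb : ∀ x : Fin r → ℝ, (2/3*σr) * (x ⬝ᵥ x) ≤ x ⬝ᵥ (S *ᵥ x) := by
    intro x
    have hxx : 0 ≤ x ⬝ᵥ x := Finset.sum_nonneg fun i _ => mul_self_nonneg _
    have hform : x ⬝ᵥ (S *ᵥ x) = (U *ᵥ x) ⬝ᵥ (Us *ᵥ x) := by
      rw [hSdef, ← mulVec_mulVec, dotProduct_mulVec, vecMul_transpose]
    have hUx : U *ᵥ x = Us *ᵥ x + Δ *ᵥ x := by
      rw [hΔ, Matrix.sub_mulVec]; abel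
    set ux := Us *ᵥ x with hux
    set dx := Δ *ᵥ x with hdx
    have huu : σr * (x ⬝ᵥ x) ≤ ux ⬝ᵥ ux := by
      have h1 : ux = Vs *ᵥ (R0 *ᵥ x) := by rw [hux, hUsdef, mulVec_mulVec]
      have h2 : ux ⬝ᵥ ux = (R0 *ᵥ x) ⬝ᵥ ((Vsᵀ * Vs) *ᵥ (R0 *ᵥ x)) := by
        rw [h1, dot_mulVec_self]
      have h3 : (R0 *ᵥ x) ⬝ᵥ (R0 *ᵥ x) = x ⬝ᵥ x := by
        rw [dot_mulVec_self, hR02, one_mulVec]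
      have h4 := rayleigh (Vsᵀ * Vs) hherm (R0 *ᵥ x)
      rw [h3, ← h2] at h4
      rw [hσr]
      exact h4
    have hdd : dx ⬝ᵥ dx ≤ frob Δ ^ 2 * (x ⬝ᵥ x) := mulVec_sq_le Δ x
    -- scalar bookkeeping
    set nx := Real.sqrt (x ⬝ᵥ x) with hnx
    set u := Real.sqrt (ux ⬝ᵥ ux) with hu
    set dd := Real.sqrt (dx ⬝ᵥ dx) with hddd
    set b := frob Δ with hb
    set σ := Real.sqrt σr with hσ
    have hnx0 : 0 ≤ nx := Real.sqrt_nonneg _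
    have hu0 : 0 ≤ u := Real.sqrt_nonneg _
    have hdd0 : 0 ≤ dd := Real.sqrt_nonneg _
    have hb0 : 0 ≤ b := frob_nonneg _
    have hσ0 : 0 ≤ σ := Real.sqrt_nonneg _
    have hσ2 : σ^2 = σr := Real.sq_sqrt hσnn
    have hnx2 : nx^2 = x ⬝ᵥ x := Real.sq_sqrt hxx
    have hu2 : u^2 = ux ⬝ᵥ ux := Real.sq_sqrt (Finset.sum_nonneg fun i _ => mul_self_nonneg _)
    have hdd2 : dd^2 = dx ⬝ᵥ dx := Real.sq_sqrt (Finset.sum_nonneg fun i _ => mul_self_nonneg _)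
    have hbσ : b ≤ 1/3*σ := hclose
    have hcs : -(dd * u) ≤ dx ⬝ᵥ ux := by
      have := dot_cs dx ux
      rw [← hddd, ← hu] at this
      exact this
    have hdxle : dd ≤ b * nx := by
      have h6 : dd^2 ≤ (b*nx)^2 := by rw [hdd2]; rw [mul_pow]; rw [hnx2]; exact hdd
      have h7 : 0 ≤ b * nx := mul_nonneg hb0 hnx0
      nlinarith
    have huge : σ * nx ≤ u := by
      have h6 : (σ*nx)^2 ≤ u^2 := by rw [hu2, mul_pow, hσ2, hnx2]; exact huu
      nlinarith [mul_nonneg hσ0 hnx0]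
    -- main chain
    have hprod : (σ*nx) * (σ*nx - b*nx) ≤ u * (u - b*nx) := by
      apply mul_le_mul huge (by linarith) _ hu0
      have : b * nx ≤ (1/3*σ) * nx := mul_le_mul_of_nonneg_right hbσ hnx0
      nlinarith [mul_nonneg hσ0 hnx0]
    have hfin : 2/3*σr * nx^2 ≤ (σ*nx) * (σ*nx - b*nx) := by
      have h8 : σ * b ≤ σ * (1/3*σ) := mul_le_mul_of_nonneg_left hbσ hσ0
      nlinarith [sq_nonneg nx]
    rw [hform, hUx, add_dotProduct, ← hnx2]
    have h9 : dx ⬝ᵥ ux ≥ -(b*nx*u) := by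
      have := mul_le_mul_of_nonneg_right hdxle hu0
      linarith
    nlinarith [hprod, hfin, h9, hu2, hcs]
  -- Step 4: PSD matrices
  have hSsub : (S - (2/3*σr) • 1).PosSemidef := by
    refine Matrix.PosSemidef.of_dotProduct_mulVec_nonneg ?_ ?_
    · show (S - (2/3*σr) • (1:Matrix (Fin r) (Fin r) ℝ))ᴴ = _
      simp only [Matrix.conjTranspose_eq_transpose_of_trivial, Matrix.transpose_sub,
        Matrix.transpose_smul, Matrix.transpose_one, hS]
    · intro x
      have := hS_lb x
      simp only [star_trivial, Matrix.sub_mulVec, Matrix.smul_mulVec, Matrix.one_mulVec,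
        dotProduct_sub, dotProduct_smul, smul_eq_mul]
      linarith
  have hW : (Δᵀ * Δ).PosSemidef := by
    have := Matrix.posSemidef_conjTranspose_mul_self Δ
    simpa [Matrix.conjTranspose_eq_transpose_of_trivial] using this
  have htrSW : 2/3*σr * (Δᵀ * Δ).trace ≤ (S * (Δᵀ * Δ)).trace := by
    have h1 := trace_mul_psd_nonneg _ _ hSsub hW
    rw [Matrix.sub_mul, Matrix.smul_mul, Matrix.one_mul, Matrix.trace_sub,
      Matrix.trace_smul, smul_eq_mul] at h1
    linarith
  -- Step 5: the gradient identity
  have hM : Vs * Vsᵀ = Us * Usᵀ := by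
    rw [hUsdef, Matrix.transpose_mul, Matrix.mul_assoc, ← Matrix.mul_assoc R0, hR01,
      Matrix.one_mul]
  have hmip : mip (gradf (Vs * Vsᵀ) U) Δ
      = 2 * ((S * (Δᵀ * Δ)).trace + ((Uᵀ * Δ) * (Uᵀ * Δ)).trace) := by
    rw [mip, gradf, hM]
    rw [Matrix.transpose_smul, Matrix.smul_mul, Matrix.trace_smul, smul_eq_mul]
    congr 1
    have hsymm : (U * Uᵀ - Us * Usᵀ)ᵀ = U * Uᵀ - Us * Usᵀ := by
      rw [Matrix.transpose_sub, Matrix.transpose_mul, Matrix.transpose_mul,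
        Matrix.transpose_transpose, Matrix.transpose_transpose]
    rw [Matrix.transpose_mul, hsymm]
    have hid : Uᵀ * (U * Uᵀ - Us * Usᵀ) * Δ
        = S * (Δᵀ * Δ) + (Uᵀ * Δ) * (Uᵀ * Δ) := by
      rw [hSdef, hΔ, Matrix.transpose_sub]
      simp only [Matrix.mul_sub, Matrix.sub_mul, Matrix.mul_assoc]
      abel
    rw [hid, Matrix.trace_add]
  -- Step 6: the pure-square term is nonnegative
  have hT : (Uᵀ * Δ)ᵀ = Uᵀ * Δ := by
    have h1 : Uᵀ * Δ = Uᵀ * U - S := by rw [hSdef, hΔ, Matrix.mul_sub]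
    rw [h1, Matrix.transpose_sub, Matrix.transpose_mul, Matrix.transpose_transpose, hS]
  have hTnn : 0 ≤ ((Uᵀ * Δ) * (Uᵀ * Δ)).trace := by
    have : ((Uᵀ * Δ) * (Uᵀ * Δ)).trace = ((Uᵀ * Δ)ᵀ * (Uᵀ * Δ)).trace := by rw [hT]
    rw [this, frob_sq_eq]
    positivity
  -- conclusion
  have htrW : (Δᵀ * Δ).trace = frob Δ ^ 2 := frob_sq_eq Δ
  have hnn : 0 ≤ 2/3*σr * frob Δ ^ 2 := by positivity
  rw [hmip]
  rw [htrW] at htrSW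
  linarith
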